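/- RPL₀ is refutationally complete: for every quantifier-free first-order formula F whose universal closure ∀F is unsatisfiable, there exists an RPL₀-derivation of the empty sequent ⊢ from axioms of the form ⊢ Fϑ, where each ϑ is a renaming of the variables of F. -/

import Mathlib

namespace RPL0

/-- First-order terms over variables `V` and function symbols `Fn` with arities `far`. -/
inductive Tm (V : Type) (Fn : Type) (far : Fn → ℕ) : Type where
  | var : V → Tm V Fn far
  | app : (f : Fn) → (Fin (far f) → Tm V Fn far) → Tm V Fn far

variable {V Fn Pr : Type} {far : Fn → ℕ} {par : Pr → ℕ}

def Tm.subst (θ : V → Tm V Fn far) : Tm V Fn far → Tm V Fn far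
  | .var v => θ v
  | .app f ts => .app f fun i => (ts i).subst θ

def Tm.HasVar (v : V) : Tm V Fn far → Prop
  | .var w => w = v
  | .app _ ts => ∃ i, (ts i).HasVar v

/-- Quantifier-free first-order formulas `PL₀` over predicate symbols `Pr` with arities `par`. -/
inductive Fm (V : Type) (Fn : Type) (far : Fn → ℕ) (Pr : Type) (par : Pr → ℕ) : Type where
  | atom : (P : Pr) → (Fin (par P) → Tm V Fn far) → Fm V Fn far Pr par
  | not : Fm V Fn far Pr par → Fm V Fn far Pr par
  | and : Fm V Fn far Pr par → Fm V Fn far Pr par → Fm V Fn far Pr par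
  | or : Fm V Fn far Pr par → Fm V Fn far Pr par → Fm V Fn far Pr par

def Fm.subst (θ : V → Tm V Fn far) : Fm V Fn far Pr par → Fm V Fn far Pr par
  | .atom P ts => .atom P fun i => (ts i).subst θ
  | .not A => .not (A.subst θ)
  | .and A B => .and (A.subst θ) (B.subst θ)
  | .or A B => .or (A.subst θ) (B.subst θ)

def Fm.HasVar (v : V) : Fm V Fn far Pr par → Prop
  | .atom _ ts => ∃ i, (ts i).HasVar v
  | .not A => A.HasVar v
  | .and A B => A.HasVar v ∨ B.HasVar v
  | .or A B => A.HasVar v ∨ B.HasVar v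

/-- `θ` unifies the set (multiset) of formulas `S`. -/
def Unifies (θ : V → Tm V Fn far) (S : Multiset (Fm V Fn far Pr par)) : Prop :=
  ∀ A ∈ S, ∀ B ∈ S, Fm.subst θ A = Fm.subst θ B

/-- `θ` is a most general unifier of the formulas in `S`. -/
def IsMGU (θ : V → Tm V Fn far) (S : Multiset (Fm V Fn far Pr par)) : Prop :=
  Unifies θ S ∧ ∀ θ' : V → Tm V Fn far, Unifies θ' S →
    ∃ η : V → Tm V Fn far, ∀ v, (θ v).subst η = θ' v

/-- Derivability in the calculus `RPL₀` from axioms `⊢ F` for `F ∈ Ax`.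
Sequents are pairs of multisets of `PL₀`-formulas. -/
inductive Der (Ax : Set (Fm V Fn far Pr par)) :
    Multiset (Fm V Fn far Pr par) → Multiset (Fm V Fn far Pr par) → Prop where
  | ax {A : Fm V Fn far Pr par} : A ∈ Ax → Der Ax 0 {A}
  | andr1 {Γ Δ : Multiset (Fm V Fn far Pr par)} {A B : Fm V Fn far Pr par} :
      Der Ax Γ (A.and B ::ₘ Δ) → Der Ax Γ (A ::ₘ Δ)
  | andr2 {Γ Δ : Multiset (Fm V Fn far Pr par)} {A B : Fm V Fn far Pr par} :
      Der Ax Γ (A.and B ::ₘ Δ) → Der Ax Γ (B ::ₘ Δ)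
  | andl {Γ Δ : Multiset (Fm V Fn far Pr par)} {A B : Fm V Fn far Pr par} :
      Der Ax (A.and B ::ₘ Γ) Δ → Der Ax (A ::ₘ B ::ₘ Γ) Δ
  | orr {Γ Δ : Multiset (Fm V Fn far Pr par)} {A B : Fm V Fn far Pr par} :
      Der Ax Γ (A.or B ::ₘ Δ) → Der Ax Γ (A ::ₘ B ::ₘ Δ)
  | orl1 {Γ Δ : Multiset (Fm V Fn far Pr par)} {A B : Fm V Fn far Pr par} :
      Der Ax (A.or B ::ₘ Γ) Δ → Der Ax (A ::ₘ Γ) Δ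
  | orl2 {Γ Δ : Multiset (Fm V Fn far Pr par)} {A B : Fm V Fn far Pr par} :
      Der Ax (A.or B ::ₘ Γ) Δ → Der Ax (B ::ₘ Γ) Δ
  | negr {Γ Δ : Multiset (Fm V Fn far Pr par)} {A : Fm V Fn far Pr par} :
      Der Ax Γ (A.not ::ₘ Δ) → Der Ax (A ::ₘ Γ) Δ
  | negl {Γ Δ : Multiset (Fm V Fn far Pr par)} {A : Fm V Fn far Pr par} :
      Der Ax (A.not ::ₘ Γ) Δ → Der Ax Γ (A ::ₘ Δ)
  | res {Γ Δ Γ₂ Λ : Multiset (Fm V Fn far Pr par)} (As Bs : Multiset (Fm V Fn far Pr par))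
      (θ : V → Tm V Fn far) :
      As ≠ 0 → Bs ≠ 0 →
      (∀ v : V, (∃ A ∈ As, Fm.HasVar v A) → ¬ ∃ B ∈ Bs, Fm.HasVar v B) →
      IsMGU θ (As + Bs) →
      Der Ax Γ (Δ + As) → Der Ax (Bs + Γ₂) Λ →
      Der Ax (Γ.map (Fm.subst θ) + Γ₂.map (Fm.subst θ)) (Δ.map (Fm.subst θ) + Λ.map (Fm.subst θ))

variable {α : Type}

def Tm.eval (fI : (f : Fn) → (Fin (far f) → α) → α) (v : V → α) : Tm V Fn far → α
  | .var x => v x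
  | .app f ts => fI f fun i => (ts i).eval fI v

def Fm.truth (fI : (f : Fn) → (Fin (far f) → α) → α)
    (pI : (P : Pr) → (Fin (par P) → α) → Prop) (v : V → α) : Fm V Fn far Pr par → Prop
  | .atom P ts => pI P fun i => (ts i).eval fI v
  | .not A => ¬ A.truth fI pI v
  | .and A B => A.truth fI pI v ∧ B.truth fI pI v
  | .or A B => A.truth fI pI v ∨ B.truth fI pI v

/-- A structure satisfies the universal closure of the sequent `Γ ⊢ Δ`,
read as the implication `⋀Γ → ⋁Δ`. -/
def SeqHolds (fI : (f : Fn) → (Fin (far f) → α) → α)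
    (pI : (P : Pr) → (Fin (par P) → α) → Prop)
    (Γ Δ : Multiset (Fm V Fn far Pr par)) : Prop :=
  ∀ v : V → α, (∀ A ∈ Γ, Fm.truth fI pI v A) → ∃ B ∈ Δ, Fm.truth fI pI v B

end RPL0

namespace RPL0
variable {V Fn Pr : Type} {far : Fn → ℕ} {par : Pr → ℕ}

/-! ### Basic substitution lemmas -/

theorem Tm.subst_subst (a b : V → Tm V Fn far) (t : Tm V Fn far) :
    (t.subst a).subst b = t.subst (fun v => (a v).subst b) := by
  induction t with
  | var v => rfl
  | app f ts ih => simp only [Tm.subst]; exact congrArg _ (funext fun i => ih i)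

theorem Tm.subst_var (t : Tm V Fn far) : t.subst Tm.var = t := by
  induction t with
  | var v => rfl
  | app f ts ih => simp only [Tm.subst]; exact congrArg _ (funext fun i => ih i)

theorem Fm.subst_subst (a b : V → Tm V Fn far) (A : Fm V Fn far Pr par) :
    (A.subst a).subst b = A.subst (fun v => (a v).subst b) := by
  induction A with
  | atom P ts => simp only [Fm.subst, Tm.subst_subst]
  | not A ih => simp only [Fm.subst, ih]
  | and A B ihA ihB => simp only [Fm.subst, ihA, ihB]
  | or A B ihA ihB => simp only [Fm.subst, ihA, ihB]

theorem Fm.subst_var (A : Fm V Fn far Pr par) : A.subst Tm.var = A := by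
  induction A with
  | atom P ts => simp only [Fm.subst, Tm.subst_var]
  | not A ih => simp only [Fm.subst, ih]
  | and A B ihA ihB => simp only [Fm.subst, ihA, ihB]
  | or A B ihA ihB => simp only [Fm.subst, ihA, ihB]

theorem Tm.subst_congr {a b : V → Tm V Fn far} (t : Tm V Fn far)
    (h : ∀ v, t.HasVar v → a v = b v) : t.subst a = t.subst b := by
  induction t with
  | var v => exact h v rfl
  | app f ts ih =>
    simp only [Tm.subst]
    exact congrArg _ (funext fun i => ih i fun v hv => h v ⟨i, hv⟩)

theorem Fm.subst_congr {a b : V → Tm V Fn far} (A : Fm V Fn far Pr par)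
    (h : ∀ v, A.HasVar v → a v = b v) : A.subst a = A.subst b := by
  induction A with
  | atom P ts =>
    simp only [Fm.subst]
    exact congrArg _ (funext fun i => Tm.subst_congr _ fun v hv => h v ⟨i, hv⟩)
  | not A ih => exact congrArg _ (ih h)
  | and A B ihA ihB =>
    simp only [Fm.subst]
    rw [show A.subst a = A.subst b from ihA fun v hv => h v (Or.inl hv),
        show B.subst a = B.subst b from ihB fun v hv => h v (Or.inr hv)]
  | or A B ihA ihB =>
    simp only [Fm.subst]
    rw [show A.subst a = A.subst b from ihA fun v hv => h v (Or.inl hv),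
        show B.subst a = B.subst b from ihB fun v hv => h v (Or.inr hv)]

theorem Tm.hasVar_subst {w : V} {θ : V → Tm V Fn far} {t : Tm V Fn far}
    (h : (t.subst θ).HasVar w) : ∃ v, t.HasVar v ∧ (θ v).HasVar w := by
  induction t with
  | var v => exact ⟨v, rfl, h⟩
  | app f ts ih =>
    obtain ⟨i, hi⟩ := h
    obtain ⟨v, hv1, hv2⟩ := ih i hi
    exact ⟨v, ⟨i, hv1⟩, hv2⟩

theorem Fm.hasVar_subst {w : V} {θ : V → Tm V Fn far} {A : Fm V Fn far Pr par}
    (h : (A.subst θ).HasVar w) : ∃ v, A.HasVar v ∧ (θ v).HasVar w := by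
  induction A with
  | atom P ts =>
    obtain ⟨i, hi⟩ := h
    obtain ⟨v, hv1, hv2⟩ := Tm.hasVar_subst hi
    exact ⟨v, ⟨i, hv1⟩, hv2⟩
  | not A ih => exact ih h
  | and A B ihA ihB =>
    rcases h with h | h
    · obtain ⟨v, h1, h2⟩ := ihA h; exact ⟨v, Or.inl h1, h2⟩
    · obtain ⟨v, h1, h2⟩ := ihB h; exact ⟨v, Or.inr h1, h2⟩
  | or A B ihA ihB =>
    rcases h with h | h
    · obtain ⟨v, h1, h2⟩ := ihA h; exact ⟨v, Or.inl h1, h2⟩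
    · obtain ⟨v, h1, h2⟩ := ihB h; exact ⟨v, Or.inr h1, h2⟩

/-- Renaming substitution. -/
def ren (ρ : V → V) : V → Tm V Fn far := fun v => Tm.var (ρ v)

theorem Fm.hasVar_ren {w : V} {ρ : V → V} {A : Fm V Fn far Pr par}
    (h : (A.subst (ren ρ)).HasVar w) : w ∈ Set.range ρ := by
  obtain ⟨v, _, h2⟩ := Fm.hasVar_subst h
  exact ⟨v, h2⟩

end RPL0
namespace RPL0
variable {V Fn Pr : Type} {far : Fn → ℕ} {par : Pr → ℕ}

/-! ### Unification -/

def Tm.size : Tm V Fn far → ℕ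
  | .var _ => 1
  | .app _ ts => 1 + ∑ i, (ts i).size

theorem Tm.size_pos (t : Tm V Fn far) : 0 < t.size := by
  cases t <;> simp [Tm.size]

theorem Tm.size_subst_le (σ : V → Tm V Fn far) {x : V} {t : Tm V Fn far} (h : t.HasVar x) :
    (σ x).size ≤ (t.subst σ).size := by
  induction t with
  | var w => cases h; exact le_rfl
  | app f ts ih =>
    obtain ⟨i, hi⟩ := h
    calc (σ x).size ≤ ((ts i).subst σ).size := ih i hi
    _ ≤ ∑ j, ((ts j).subst σ).size :=
        Finset.single_le_sum (f := fun j => ((ts j).subst σ).size) (fun j _ => Nat.zero_le _) (Finset.mem_univ i)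
    _ ≤ ((Tm.app f ts).subst σ).size := by simp [Tm.subst, Tm.size]

theorem Tm.size_subst_lt (σ : V → Tm V Fn far) {x : V} {f : Fn} {ts : Fin (far f) → Tm V Fn far}
    (h : (Tm.app f ts).HasVar x) : (σ x).size < ((Tm.app f ts).subst σ).size := by
  obtain ⟨i, hi⟩ := h
  calc (σ x).size ≤ ((ts i).subst σ).size := Tm.size_subst_le σ hi
  _ ≤ ∑ j, ((ts j).subst σ).size :=
      Finset.single_le_sum (f := fun j => ((ts j).subst σ).size) (fun j _ => Nat.zero_le _) (Finset.mem_univ i)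
  _ < ((Tm.app f ts).subst σ).size := by simp [Tm.subst, Tm.size]

theorem Tm.finite_hasVar (t : Tm V Fn far) : {v | t.HasVar v}.Finite := by
  induction t with
  | var w =>
    have : {v | (Tm.var w : Tm V Fn far).HasVar v} = {w} := by
      ext v; simp [Tm.HasVar, eq_comm]
    rw [this]; exact Set.finite_singleton w
  | app f ts ih =>
    have : {v | (Tm.app f ts).HasVar v} = ⋃ i, {v | (ts i).HasVar v} := by
      ext v; simp [Tm.HasVar]
    rw [this]; exact Set.finite_iUnion ih

def EVars (E : List (Tm V Fn far × Tm V Fn far)) : Set V :=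
  {v | ∃ p ∈ E, p.1.HasVar v ∨ p.2.HasVar v}

theorem EVars_finite (E : List (Tm V Fn far × Tm V Fn far)) : (EVars E).Finite := by
  induction E with
  | nil => convert Set.finite_empty; ext v; simp [EVars]
  | cons p E ih =>
    have : EVars (p :: E) = ({v | p.1.HasVar v} ∪ {v | p.2.HasVar v}) ∪ EVars E := by
      ext v; simp [EVars]
    rw [this]
    exact (((Tm.finite_hasVar p.1).union (Tm.finite_hasVar p.2))).union ih

def Esize (E : List (Tm V Fn far × Tm V Fn far)) : ℕ :=
  (E.map (fun p => p.1.size + p.2.size)).sum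

def EUnifies (σ : V → Tm V Fn far) (E : List (Tm V Fn far × Tm V Fn far)) : Prop :=
  ∀ p ∈ E, p.1.subst σ = p.2.subst σ

/-- Robinson's unification theorem for lists of term equations. -/
theorem unify_main (n : ℕ) : ∀ (s : ℕ) (E : List (Tm V Fn far × Tm V Fn far)),
    (EVars E).ncard ≤ n → Esize E ≤ s → (∃ σ, EUnifies σ E) →
    ∃ θ, EUnifies θ E ∧ ∀ σ, EUnifies σ E → ∃ η, ∀ v, (θ v).subst η = σ v := by
  classical
  induction n using Nat.strong_induction_on with
  | _ n ihn =>
  intro s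
  induction s using Nat.strong_induction_on with
  | _ s ihs =>
  intro E hn hs hun
  match E with
  | [] =>
    refine ⟨Tm.var, fun p hp => absurd hp List.not_mem_nil, fun σ _ => ⟨σ, fun v => rfl⟩⟩
  | (t, u) :: E' =>
    -- basic size facts
    have hsize2 : 2 ≤ Esize ((t, u) :: E') := by
      have := Tm.size_pos t; have := Tm.size_pos u
      simp only [Esize, List.map_cons, List.sum_cons]; omega
    have hsE' : Esize E' < s := by
      simp only [Esize, List.map_cons, List.sum_cons] at hs ⊢
      have := Tm.size_pos t; have := Tm.size_pos u
      omega
    -- variable elimination subcase, abstracted over orientation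
    have elim : ∀ (x : V) (w : Tm V Fn far), ¬ w.HasVar x →
        (EVars ((Tm.var x, w) :: E')).ncard ≤ n →
        (∃ σ, EUnifies σ ((Tm.var x, w) :: E')) →
        ∃ θ, EUnifies θ ((Tm.var x, w) :: E') ∧
          ∀ σ, EUnifies σ ((Tm.var x, w) :: E') → ∃ η, ∀ v, (θ v).subst η = σ v := by
      intro x w hxw hn hun
      set δ : V → Tm V Fn far := Function.update Tm.var x w with hδ
      have hδx : δ x = w := Function.update_self x w Tm.var
      have hδo : ∀ v, v ≠ x → δ v = Tm.var v := fun v hv => Function.update_of_ne hv w Tm.var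
      have hwδ : w.subst δ = w := by
        rw [show w.subst δ = w.subst Tm.var from
          Tm.subst_congr w fun v hv => hδo v (fun h => hxw (h ▸ hv)), Tm.subst_var]
      set E'' := E'.map (fun p => (p.1.subst δ, p.2.subst δ)) with hE''
      -- substitution composition through δ for unifiers of the head equation
      have key : ∀ σ : V → Tm V Fn far, σ x = w.subst σ →
          ∀ t₀ : Tm V Fn far, (t₀.subst δ).subst σ = t₀.subst σ := by
        intro σ hσ t₀
        rw [Tm.subst_subst]
        refine Tm.subst_congr t₀ fun v _ => ?_
        by_cases hv : v = x
        · subst hv; rw [hδx, ← hσ]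
        · rw [hδo v hv]; rfl
      -- vars of E'' avoid x and are included in vars of E
      have hvars : EVars E'' ⊆ EVars ((Tm.var x, w) :: E') \ {x} := by
        intro v hv
        obtain ⟨p, hp, hcase⟩ := hv
        rw [hE''] at hp
        obtain ⟨q, hq, rfl⟩ := List.mem_map.1 hp
        have : ∃ v₀, (q.1.HasVar v₀ ∨ q.2.HasVar v₀) ∧ (δ v₀).HasVar v := by
          rcases hcase with h | h
          · obtain ⟨v₀, h1, h2⟩ := Tm.hasVar_subst h; exact ⟨v₀, Or.inl h1, h2⟩
          · obtain ⟨v₀, h1, h2⟩ := Tm.hasVar_subst h; exact ⟨v₀, Or.inr h1, h2⟩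
        obtain ⟨v₀, h1, h2⟩ := this
        by_cases hv₀ : v₀ = x
        · subst hv₀; rw [hδx] at h2
          refine ⟨⟨(Tm.var v₀, w), List.mem_cons_self, Or.inr h2⟩, ?_⟩
          simp only [Set.mem_singleton_iff]
          exact fun h => hxw (h ▸ h2)
        · rw [hδo v₀ hv₀] at h2
          cases h2
          exact ⟨⟨q, List.mem_cons_of_mem _ hq, h1⟩, hv₀⟩
      have hxmem : x ∈ EVars ((Tm.var x, w) :: E') :=
        ⟨(Tm.var x, w), List.mem_cons_self, Or.inl rfl⟩
      have hfin := EVars_finite ((Tm.var x, w) :: E')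
      have hnpos : 1 ≤ n := le_trans ((Set.ncard_pos hfin).2 ⟨x, hxmem⟩) hn
      have hcard : (EVars E'').ncard ≤ n - 1 := by
        have h1 : (EVars E'').ncard ≤ (EVars ((Tm.var x, w) :: E') \ {x}).ncard :=
          Set.ncard_le_ncard hvars hfin.diff
        have h2 : (EVars ((Tm.var x, w) :: E') \ {x}).ncard
            = (EVars ((Tm.var x, w) :: E')).ncard - 1 :=
          Set.ncard_diff_singleton_of_mem hxmem
        omega
      obtain ⟨σ₀, hσ₀⟩ := hun
      have hσ₀x : σ₀ x = w.subst σ₀ := hσ₀ _ (List.mem_cons_self)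
      have hunif'' : ∀ σ : V → Tm V Fn far, σ x = w.subst σ → EUnifies σ E' → EUnifies σ E'' := by
        intro σ hσx hσ p hp
        obtain ⟨q, hq, rfl⟩ := List.mem_map.1 hp
        show (q.1.subst δ).subst σ = (q.2.subst δ).subst σ
        rw [key σ hσx, key σ hσx]
        exact hσ q hq
      obtain ⟨θ', hθ'u, hθ'm⟩ := ihn (n - 1) (by omega) (Esize E'') E'' hcard le_rfl
        ⟨σ₀, hunif'' σ₀ hσ₀x (fun p hp => hσ₀ p (List.mem_cons_of_mem _ hp))⟩
      refine ⟨fun v => (δ v).subst θ', ?_, ?_⟩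
      · intro p hp
        rcases List.mem_cons.1 hp with rfl | hp
        · show (Tm.var x).subst _ = w.subst _
          have h1 : (Tm.var x).subst (fun v => (δ v).subst θ') = w.subst θ' := by
            show (δ x).subst θ' = w.subst θ'
            rw [hδx]
          have h2 : w.subst (fun v => (δ v).subst θ') = w.subst θ' := by
            rw [← Tm.subst_subst, hwδ]
          rw [h1, h2]
        · show p.1.subst _ = p.2.subst _
          rw [← Tm.subst_subst, ← Tm.subst_subst]
          exact hθ'u _ (List.mem_map.2 ⟨p, hp, rfl⟩)
      · intro σ hσ
        have hσx : σ x = w.subst σ := hσ _ (List.mem_cons_self)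
        obtain ⟨η, hη⟩ := hθ'm σ (hunif'' σ hσx (fun p hp => hσ p (List.mem_cons_of_mem _ hp)))
        refine ⟨η, fun v => ?_⟩
        rw [Tm.subst_subst]
        have : (fun u => (θ' u).subst η) = σ := funext hη
        rw [this]
        by_cases hv : v = x
        · subst hv; rw [hδx, ← hσx]
        · rw [hδo v hv]; rfl
    -- now the case analysis on the head pair
    match t, u with
    | Tm.var x, w =>
      by_cases hw : w = Tm.var x
      · subst hw
        have hsub : EVars E' ⊆ EVars ((Tm.var x, Tm.var x) :: E') := by
          intro v ⟨p, hp, hc⟩; exact ⟨p, List.mem_cons_of_mem _ hp, hc⟩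
        obtain ⟨σ₀, hσ₀⟩ := hun
        obtain ⟨θ, hθu, hθm⟩ := ihs (Esize E') hsE' E'
          (le_trans (Set.ncard_le_ncard hsub (EVars_finite _)) hn) le_rfl
          ⟨σ₀, fun p hp => hσ₀ p (List.mem_cons_of_mem _ hp)⟩
        refine ⟨θ, ?_, ?_⟩
        · intro p hp
          rcases List.mem_cons.1 hp with rfl | hp
          · rfl
          · exact hθu p hp
        · intro σ hσ
          exact hθm σ (fun p hp => hσ p (List.mem_cons_of_mem _ hp))
      · by_cases hx : w.HasVar x
        · exfalso
          obtain ⟨σ₀, hσ₀⟩ := hun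
          have hσ₀x : σ₀ x = w.subst σ₀ := hσ₀ _ (List.mem_cons_self)
          match w, hx with
          | Tm.var y, hx =>
            cases hx
            exact hw rfl
          | Tm.app f ts, hx =>
            have := Tm.size_subst_lt σ₀ hx
            rw [← hσ₀x] at this
            omega
        · exact elim x w hx hn hun
    | Tm.app f ts, Tm.var x =>
      by_cases hx : (Tm.app f ts).HasVar x
      · exfalso
        obtain ⟨σ₀, hσ₀⟩ := hun
        have hσ₀x : (Tm.app f ts).subst σ₀ = σ₀ x := hσ₀ _ (List.mem_cons_self)
        have := Tm.size_subst_lt σ₀ hx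
        rw [hσ₀x] at this
        omega
      · have hvarseq : EVars ((Tm.var x, Tm.app f ts) :: E')
            = EVars ((Tm.app f ts, Tm.var x) :: E') := by
          ext v
          constructor <;>
          · rintro ⟨p, hp, hc⟩
            rcases List.mem_cons.1 hp with rfl | hp
            · exact ⟨_, List.mem_cons_self, hc.symm⟩
            · exact ⟨p, List.mem_cons_of_mem _ hp, hc⟩
        have hswap : ∀ σ : V → Tm V Fn far,
            EUnifies σ ((Tm.var x, Tm.app f ts) :: E') ↔
            EUnifies σ ((Tm.app f ts, Tm.var x) :: E') := by
          intro σ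
          constructor <;>
          · intro h p hp
            rcases List.mem_cons.1 hp with rfl | hp
            · exact (h _ (List.mem_cons_self)).symm
            · exact h p (List.mem_cons_of_mem _ hp)
        obtain ⟨θ, hθu, hθm⟩ := elim x (Tm.app f ts) hx (by rw [hvarseq]; exact hn)
          (hun.imp fun σ hσ => (hswap σ).2 hσ)
        exact ⟨θ, (hswap θ).1 hθu, fun σ hσ => hθm σ ((hswap σ).2 hσ)⟩
    | Tm.app f ts, Tm.app g ss =>
      obtain ⟨σ₀, hσ₀⟩ := hun
      have hfg : f = g := by
        have := hσ₀ _ (List.mem_cons_self)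
        simp only [Tm.subst] at this
        exact (Tm.app.inj this).1
      subst hfg
      -- component equations
      set E₀ := (List.ofFn fun i => (ts i, ss i)) ++ E' with hE₀
      have comp_of : ∀ σ : V → Tm V Fn far,
          (Tm.app f ts).subst σ = (Tm.app f ss).subst σ → ∀ i, (ts i).subst σ = (ss i).subst σ := by
        intro σ h i
        simp only [Tm.subst] at h
        exact congrFun (eq_of_heq (Tm.app.inj h).2) i
      have of_comp : ∀ σ : V → Tm V Fn far,
          (∀ i, (ts i).subst σ = (ss i).subst σ) → (Tm.app f ts).subst σ = (Tm.app f ss).subst σ := by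
        intro σ h
        simp only [Tm.subst]
        exact congrArg _ (funext h)
      have hiff : ∀ σ : V → Tm V Fn far,
          EUnifies σ ((Tm.app f ts, Tm.app f ss) :: E') ↔ EUnifies σ E₀ := by
        intro σ
        constructor
        · intro h p hp
          rcases List.mem_append.1 hp with hp | hp
          · obtain ⟨i, rfl⟩ := List.mem_ofFn.1 hp
            exact comp_of σ (h _ (List.mem_cons_self)) i
          · exact h p (List.mem_cons_of_mem _ hp)
        · intro h p hp
          rcases List.mem_cons.1 hp with rfl | hp
          · exact of_comp σ fun i => h _ (List.mem_append_left _ (List.mem_ofFn.2 ⟨i, rfl⟩))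
          · exact h p (List.mem_append_right _ hp)
      have hvsub : EVars E₀ ⊆ EVars ((Tm.app f ts, Tm.app f ss) :: E') := by
        rintro v ⟨p, hp, hc⟩
        rcases List.mem_append.1 hp with hp | hp
        · obtain ⟨i, rfl⟩ := List.mem_ofFn.1 hp
          exact ⟨_, List.mem_cons_self, hc.imp (fun h => ⟨i, h⟩) (fun h => ⟨i, h⟩)⟩
        · exact ⟨p, List.mem_cons_of_mem _ hp, hc⟩
      have hsz : Esize E₀ < s := by
        have h1 : Esize E₀ = (∑ i, (ts i).size) + (∑ i, (ss i).size) + Esize E' := by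
          simp only [Esize, hE₀, List.map_append, List.sum_append, List.map_ofFn]
          rw [List.sum_ofFn]
          simp [Finset.sum_add_distrib]
        have h2 : Esize ((Tm.app f ts, Tm.app f ss) :: E')
            = (1 + ∑ i, (ts i).size) + (1 + ∑ i, (ss i).size) + Esize E' := by
          simp only [Esize, List.map_cons, List.sum_cons, Tm.size]
          try omega
        rw [h2] at hs
        omega
      obtain ⟨θ, hθu, hθm⟩ := ihs (Esize E₀) hsz E₀
        (le_trans (Set.ncard_le_ncard hvsub (EVars_finite _)) hn) le_rfl
        ⟨σ₀, (hiff σ₀).1 hσ₀⟩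
      exact ⟨θ, (hiff θ).2 hθu, fun σ hσ => hθm σ ((hiff σ).1 hσ)⟩

end RPL0
namespace RPL0
variable {V Fn Pr : Type} {far : Fn → ℕ} {par : Pr → ℕ}

def Fm.IsAtom : Fm V Fn far Pr par → Prop
  | .atom _ _ => True
  | _ => False

theorem Fm.IsAtom.subst {A : Fm V Fn far Pr par} (h : A.IsAtom) (σ : V → Tm V Fn far) :
    (A.subst σ).IsAtom := by
  cases A <;> simp_all [Fm.IsAtom, Fm.subst]

theorem Fm.atom_eq_iff {P : Pr} (x y : Fin (par P) → Tm V Fn far) :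
    (Fm.atom P x : Fm V Fn far Pr par) = Fm.atom P y ↔ x = y := by
  constructor
  · intro h
    exact eq_of_heq (Fm.atom.inj h).2
  · rintro rfl; rfl

/-- Existence of most general unifiers for multisets of atomic formulas. -/
theorem mgu_exists (S : Multiset (Fm V Fn far Pr par)) (hat : ∀ A ∈ S, A.IsAtom)
    (hun : ∃ σ, Unifies σ S) : ∃ θ, IsMGU θ S := by
  classical
  rcases Multiset.empty_or_exists_mem S with rfl | ⟨A₀, hA₀⟩
  · exact ⟨Tm.var, fun A hA => absurd hA (by simp), fun σ' _ => ⟨σ', fun v => rfl⟩⟩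
  obtain ⟨σ₀, hσ₀⟩ := hun
  obtain ⟨P, ts₀, rfl⟩ : ∃ P ts₀, A₀ = Fm.atom P ts₀ := by
    have := hat A₀ hA₀
    cases A₀ with
    | atom P ts => exact ⟨P, ts, rfl⟩
    | _ => exact absurd this (by simp [Fm.IsAtom])
  have hform : ∀ B ∈ S, ∃ ss : Fin (par P) → Tm V Fn far, B = Fm.atom P ss := by
    intro B hB
    have hBa := hat B hB
    cases B with
    | atom Q ss =>
      have h := hσ₀ _ hA₀ _ hB
      simp only [Fm.subst] at h
      obtain ⟨rfl, -⟩ := Fm.atom.inj h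
      exact ⟨ss, rfl⟩
    | _ => exact absurd hBa (by simp [Fm.IsAtom])
  have : Nonempty (Fin (par P) → Tm V Fn far) := ⟨ts₀⟩
  choose! args hargs using hform
  set E : List (Tm V Fn far × Tm V Fn far) :=
    S.toList.flatMap (fun B => List.ofFn (fun i => (ts₀ i, args B i))) with hE
  have hiff : ∀ σ : V → Tm V Fn far, Unifies σ S ↔ EUnifies σ E := by
    intro σ
    constructor
    · intro h p hp
      obtain ⟨B, hB, hpB⟩ := List.mem_flatMap.1 hp
      have hBS : B ∈ S := Multiset.mem_toList.1 hB
      obtain ⟨i, rfl⟩ := List.mem_ofFn.1 hpB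
      have := h _ hA₀ _ hBS
      rw [hargs B hBS] at this
      simp only [Fm.subst] at this
      have := eq_of_heq (Fm.atom.inj this).2
      exact congrFun this i
    · intro h A hA B hB
      have key : ∀ C ∈ S, (Fm.atom P ts₀).subst σ = C.subst σ := by
        intro C hC
        rw [hargs C hC]
        simp only [Fm.subst]
        refine congrArg _ (funext fun i => ?_)
        exact h _ (List.mem_flatMap.2 ⟨C, Multiset.mem_toList.2 hC,
          List.mem_ofFn.2 ⟨i, rfl⟩⟩)
      rw [← key A hA, key B hB]
  obtain ⟨θ, hθu, hθm⟩ := unify_main (EVars E).ncard (Esize E) E le_rfl le_rfl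
    ⟨σ₀, (hiff σ₀).1 hσ₀⟩
  exact ⟨θ, (hiff θ).2 hθu, fun σ' hσ' => hθm σ' ((hiff σ').1 hσ')⟩

/-- An MGU composed with an injective renaming is still an MGU. -/
theorem IsMGU.comp_ren {θ : V → Tm V Fn far} {S : Multiset (Fm V Fn far Pr par)}
    (h : IsMGU θ S) {ρ : V → V} (hρ : Function.Injective ρ) :
    IsMGU (fun v => (θ v).subst (ren ρ)) S := by
  classical
  constructor
  · intro A hA B hB
    rw [← Fm.subst_subst, ← Fm.subst_subst, h.1 A hA B hB]
  · intro σ' hσ'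
    obtain ⟨η, hη⟩ := h.2 σ' hσ'
    refine ⟨fun w => if hw : ∃ v, ρ v = w then η hw.choose else Tm.var w, fun v => ?_⟩
    rw [Tm.subst_subst]
    have : (fun u => ((ren ρ : V → Tm V Fn far) u).subst
        (fun w => if hw : ∃ v, ρ v = w then η hw.choose else Tm.var w)) = η := by
      funext u
      show (if hw : ∃ v, ρ v = ρ u then η hw.choose else Tm.var (ρ u)) = η u
      rw [dif_pos ⟨u, rfl⟩]
      congr 1
      exact hρ (⟨u, rfl⟩ : ∃ v, ρ v = ρ u).choose_spec
    rw [this]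
    exact hη v

end RPL0
namespace RPL0
variable {V Fn Pr : Type} {far : Fn → ℕ} {par : Pr → ℕ}

/-! ### Clausal normal form -/

mutual
def cnfP : Fm V Fn far Pr par → List (Multiset (Fm V Fn far Pr par) × Multiset (Fm V Fn far Pr par))
  | .atom P ts => [(0, {Fm.atom P ts})]
  | .not A => cnfN A
  | .and A B => cnfP A ++ cnfP B
  | .or A B => (cnfP A).flatMap (fun c => (cnfP B).map (fun d => (c.1 + d.1, c.2 + d.2)))

def cnfN : Fm V Fn far Pr par → List (Multiset (Fm V Fn far Pr par) × Multiset (Fm V Fn far Pr par))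
  | .atom P ts => [({Fm.atom P ts}, 0)]
  | .not A => cnfP A
  | .and A B => (cnfN A).flatMap (fun c => (cnfN B).map (fun d => (c.1 + d.1, c.2 + d.2)))
  | .or A B => cnfN A ++ cnfN B
end

theorem add_cons_right (X Y : Multiset (Fm V Fn far Pr par)) (B : Fm V Fn far Pr par) :
    X + (B ::ₘ Y) = B ::ₘ (X + Y) := by
  rw [← Multiset.singleton_add, ← Multiset.singleton_add, add_left_comm]

/-- From a sequent one can derive all of its clausal normal forms. -/
theorem der_cnf {Ax : Set (Fm V Fn far Pr par)} (F : Fm V Fn far Pr par) :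
    (∀ Γ Δ, Der Ax Γ (F ::ₘ Δ) → ∀ c ∈ cnfP F, Der Ax (c.1 + Γ) (c.2 + Δ)) ∧
    (∀ Γ Δ, Der Ax (F ::ₘ Γ) Δ → ∀ c ∈ cnfN F, Der Ax (c.1 + Γ) (c.2 + Δ)) := by
  induction F with
  | atom P ts =>
    constructor
    · intro Γ Δ h c hc
      rw [cnfP] at hc
      simp only [List.mem_singleton] at hc
      subst hc
      rwa [zero_add, Multiset.singleton_add]
    · intro Γ Δ h c hc
      rw [cnfN] at hc
      simp only [List.mem_singleton] at hc
      subst hc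
      rwa [zero_add, Multiset.singleton_add]
  | not A ihA =>
    constructor
    · intro Γ Δ h c hc
      rw [cnfP] at hc
      exact ihA.2 Γ Δ (Der.negr h) c hc
    · intro Γ Δ h c hc
      rw [cnfN] at hc
      exact ihA.1 Γ Δ (Der.negl h) c hc
  | and A B ihA ihB =>
    constructor
    · intro Γ Δ h c hc
      rw [cnfP] at hc
      rcases List.mem_append.1 hc with hc | hc
      · exact ihA.1 Γ Δ (Der.andr1 h) c hc
      · exact ihB.1 Γ Δ (Der.andr2 h) c hc
    · intro Γ Δ h c hc
      rw [cnfN] at hc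
      obtain ⟨c₁, hc₁, hcm⟩ := List.mem_flatMap.1 hc
      obtain ⟨c₂, hc₂, rfl⟩ := List.mem_map.1 hcm
      have h1 := ihA.2 (B ::ₘ Γ) Δ (Der.andl h) c₁ hc₁
      rw [add_cons_right] at h1
      have h2 := ihB.2 (c₁.1 + Γ) (c₁.2 + Δ) h1 c₂ hc₂
      have e1 : c₂.1 + (c₁.1 + Γ) = c₁.1 + c₂.1 + Γ := by
        rw [← add_assoc, add_comm c₂.1 c₁.1]
      have e2 : c₂.2 + (c₁.2 + Δ) = c₁.2 + c₂.2 + Δ := by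
        rw [← add_assoc, add_comm c₂.2 c₁.2]
      rw [e1, e2] at h2
      exact h2
  | or A B ihA ihB =>
    constructor
    · intro Γ Δ h c hc
      rw [cnfP] at hc
      obtain ⟨c₁, hc₁, hcm⟩ := List.mem_flatMap.1 hc
      obtain ⟨c₂, hc₂, rfl⟩ := List.mem_map.1 hcm
      have h1 := ihA.1 Γ (B ::ₘ Δ) (Der.orr h) c₁ hc₁
      rw [add_cons_right] at h1
      have h2 := ihB.1 (c₁.1 + Γ) (c₁.2 + Δ) h1 c₂ hc₂
      have e1 : c₂.1 + (c₁.1 + Γ) = c₁.1 + c₂.1 + Γ := by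
        rw [← add_assoc, add_comm c₂.1 c₁.1]
      have e2 : c₂.2 + (c₁.2 + Δ) = c₁.2 + c₂.2 + Δ := by
        rw [← add_assoc, add_comm c₂.2 c₁.2]
      rw [e1, e2] at h2
      exact h2
    · intro Γ Δ h c hc
      rw [cnfN] at hc
      rcases List.mem_append.1 hc with hc | hc
      · exact ihA.2 Γ Δ (Der.orl1 h) c hc
      · exact ihB.2 Γ Δ (Der.orl2 h) c hc

/-! ### Propositional semantics with formulas as atoms -/

def FmTruth (g : Fm V Fn far Pr par → Prop) : Fm V Fn far Pr par → Prop
  | .atom P ts => g (.atom P ts)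
  | .not A => ¬ FmTruth g A
  | .and A B => FmTruth g A ∧ FmTruth g B
  | .or A B => FmTruth g A ∨ FmTruth g B

def ClTrue (g : Fm V Fn far Pr par → Prop)
    (c : Multiset (Fm V Fn far Pr par) × Multiset (Fm V Fn far Pr par)) : Prop :=
  (∀ A ∈ c.1, g A) → ∃ B ∈ c.2, g B

theorem ClTrue.weaken {g : Fm V Fn far Pr par → Prop}
    {c d : Multiset (Fm V Fn far Pr par) × Multiset (Fm V Fn far Pr par)}
    (h : ClTrue g c ∨ ClTrue g d) : ClTrue g (c.1 + d.1, c.2 + d.2) := by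
  rcases h with h | h <;>
  · intro hall
    simp only [Multiset.mem_add] at hall ⊢
    obtain ⟨B, hB, hgB⟩ := h (fun A hA => hall A (by tauto))
    exact ⟨B, by tauto, hgB⟩

theorem cnf_sem (g : Fm V Fn far Pr par → Prop) (F : Fm V Fn far Pr par) :
    (FmTruth g F ↔ ∀ c ∈ cnfP F, ClTrue g c) ∧
    (¬ FmTruth g F ↔ ∀ c ∈ cnfN F, ClTrue g c) := by
  classical
  induction F with
  | atom P ts =>
    constructor
    · rw [cnfP]; simp [FmTruth, ClTrue]
    · rw [cnfN]; simp [FmTruth, ClTrue]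
  | not A ihA =>
    constructor
    · rw [cnfP]; exact iff_of_eq (by rw [FmTruth]) |>.trans ihA.2
    · rw [cnfN]
      rw [show (¬ FmTruth g (Fm.not A)) ↔ FmTruth g A by rw [FmTruth]; exact not_not]
      exact ihA.1
  | and A B ihA ihB =>
    constructor
    · rw [cnfP]
      rw [show FmTruth g (A.and B) ↔ (FmTruth g A ∧ FmTruth g B) from Iff.rfl]
      rw [ihA.1, ihB.1]
      constructor
      · rintro ⟨h1, h2⟩ c hc
        rcases List.mem_append.1 hc with hc | hc
        · exact h1 c hc
        · exact h2 c hc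
      · intro h
        exact ⟨fun c hc => h c (List.mem_append_left _ hc),
               fun c hc => h c (List.mem_append_right _ hc)⟩
    · rw [cnfN]
      rw [show (¬ FmTruth g (A.and B)) ↔ (¬ FmTruth g A ∨ ¬ FmTruth g B) by
        rw [show FmTruth g (A.and B) ↔ (FmTruth g A ∧ FmTruth g B) from Iff.rfl]; tauto]
      rw [ihA.2, ihB.2]
      constructor
      · intro h c hc
        obtain ⟨c₁, hc₁, hcm⟩ := List.mem_flatMap.1 hc
        obtain ⟨c₂, hc₂, rfl⟩ := List.mem_map.1 hcm
        exact ClTrue.weaken (h.imp (fun h => h c₁ hc₁) (fun h => h c₂ hc₂))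
      · intro h
        by_contra hcon
        push_neg at hcon
        obtain ⟨⟨c₁, hc₁, hc₁f⟩, ⟨c₂, hc₂, hc₂f⟩⟩ := hcon
        rw [ClTrue] at hc₁f hc₂f
        push_neg at hc₁f hc₂f
        obtain ⟨ha1, hb1⟩ := hc₁f
        obtain ⟨ha2, hb2⟩ := hc₂f
        have := h (c₁.1 + c₂.1, c₁.2 + c₂.2) (List.mem_flatMap.2 ⟨c₁, hc₁,
          List.mem_map.2 ⟨c₂, hc₂, rfl⟩⟩)
        simp only [ClTrue, Multiset.mem_add] at this
        obtain ⟨B, hB, hgB⟩ := this (by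
          intro A hA
          rcases hA with hA | hA
          · exact ha1 A hA
          · exact ha2 A hA)
        rcases hB with hB | hB
        · exact hb1 B hB hgB
        · exact hb2 B hB hgB
  | or A B ihA ihB =>
    constructor
    · rw [cnfP]
      rw [show FmTruth g (A.or B) ↔ (FmTruth g A ∨ FmTruth g B) from Iff.rfl]
      constructor
      · intro h c hc
        obtain ⟨c₁, hc₁, hcm⟩ := List.mem_flatMap.1 hc
        obtain ⟨c₂, hc₂, rfl⟩ := List.mem_map.1 hcm
        exact ClTrue.weaken (h.imp (fun h => (ihA.1.1 h) c₁ hc₁) (fun h => (ihB.1.1 h) c₂ hc₂))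
      · intro h
        by_contra hcon
        push_neg at hcon
        obtain ⟨hA, hB⟩ := hcon
        obtain ⟨c₁, hc₁, hc₁f⟩ := by
          have := (ihA.1.not.mp hA); push_neg at this; exact this
        obtain ⟨c₂, hc₂, hc₂f⟩ := by
          have := (ihB.1.not.mp hB); push_neg at this; exact this
        rw [ClTrue] at hc₁f hc₂f
        push_neg at hc₁f hc₂f
        obtain ⟨ha1, hb1⟩ := hc₁f
        obtain ⟨ha2, hb2⟩ := hc₂f
        have := h (c₁.1 + c₂.1, c₁.2 + c₂.2) (List.mem_flatMap.2 ⟨c₁, hc₁,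
          List.mem_map.2 ⟨c₂, hc₂, rfl⟩⟩)
        simp only [ClTrue, Multiset.mem_add] at this
        obtain ⟨B', hB', hgB'⟩ := this (by
          intro A' hA'
          rcases hA' with hA' | hA'
          · exact ha1 A' hA'
          · exact ha2 A' hA')
        rcases hB' with hB' | hB'
        · exact hb1 B' hB' hgB'
        · exact hb2 B' hB' hgB'
    · rw [cnfN]
      rw [show (¬ FmTruth g (A.or B)) ↔ (¬ FmTruth g A ∧ ¬ FmTruth g B) by
        rw [show FmTruth g (A.or B) ↔ (FmTruth g A ∨ FmTruth g B) from Iff.rfl]; tauto]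
      rw [ihA.2, ihB.2]
      constructor
      · rintro ⟨h1, h2⟩ c hc
        rcases List.mem_append.1 hc with hc | hc
        · exact h1 c hc
        · exact h2 c hc
      · intro h
        exact ⟨fun c hc => h c (List.mem_append_left _ hc),
               fun c hc => h c (List.mem_append_right _ hc)⟩

/-- CNF commutes with substitution. -/
theorem cnf_subst (σ : V → Tm V Fn far) (F : Fm V Fn far Pr par) :
    cnfP (F.subst σ) = (cnfP F).map
      (fun c => (c.1.map (Fm.subst σ), c.2.map (Fm.subst σ))) ∧
    cnfN (F.subst σ) = (cnfN F).map
      (fun c => (c.1.map (Fm.subst σ), c.2.map (Fm.subst σ))) := by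
  induction F with
  | atom P ts =>
    constructor <;> simp [Fm.subst, cnfP, cnfN]
  | not A ihA =>
    constructor
    · show cnfN (A.subst σ) = _; rw [ihA.2, cnfP]
    · show cnfP (A.subst σ) = _; rw [ihA.1, cnfN]
  | and A B ihA ihB =>
    constructor
    · show cnfP (A.subst σ) ++ cnfP (B.subst σ) = _
      rw [ihA.1, ihB.1, cnfP, List.map_append]
    · show (cnfN (A.subst σ)).flatMap _ = _
      rw [ihA.2, ihB.2, cnfN, List.map_flatMap, List.flatMap_map]
      congr 1
      funext c
      rw [List.map_map, List.map_map]
      congr 1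
      funext d
      simp [Multiset.map_add]
  | or A B ihA ihB =>
    constructor
    · show (cnfP (A.subst σ)).flatMap _ = _
      rw [ihA.1, ihB.1, cnfP, List.map_flatMap, List.flatMap_map]
      congr 1
      funext c
      rw [List.map_map, List.map_map]
      congr 1
      funext d
      simp [Multiset.map_add]
    · show cnfN (A.subst σ) ++ cnfN (B.subst σ) = _
      rw [ihA.2, ihB.2, cnfN, List.map_append]

theorem cnf_atoms (F : Fm V Fn far Pr par) :
    (∀ c ∈ cnfP F, ∀ A ∈ c.1 + c.2, A.IsAtom) ∧
    (∀ c ∈ cnfN F, ∀ A ∈ c.1 + c.2, A.IsAtom) := by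
  induction F with
  | atom P ts =>
    constructor <;>
    · intro c hc A hA
      simp only [cnfP, cnfN, List.mem_singleton] at hc
      subst hc
      simp only [Multiset.mem_add] at hA
      rcases hA with hA | hA <;> simp_all [Fm.IsAtom]
  | not A ihA =>
    exact ⟨fun c hc => ihA.2 c (by rwa [cnfP] at hc), fun c hc => ihA.1 c (by rwa [cnfN] at hc)⟩
  | and A B ihA ihB =>
    constructor
    · intro c hc
      rw [cnfP] at hc
      rcases List.mem_append.1 hc with hc | hc
      · exact ihA.1 c hc
      · exact ihB.1 c hc
    · intro c hc
      rw [cnfN] at hc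
      obtain ⟨c₁, hc₁, hcm⟩ := List.mem_flatMap.1 hc
      obtain ⟨c₂, hc₂, rfl⟩ := List.mem_map.1 hcm
      intro A hA
      simp only [Multiset.mem_add] at hA
      rcases hA with (hA | hA) | (hA | hA)
      · exact ihA.2 c₁ hc₁ A (Multiset.mem_add.2 (Or.inl hA))
      · exact ihB.2 c₂ hc₂ A (Multiset.mem_add.2 (Or.inl hA))
      · exact ihA.2 c₁ hc₁ A (Multiset.mem_add.2 (Or.inr hA))
      · exact ihB.2 c₂ hc₂ A (Multiset.mem_add.2 (Or.inr hA))
  | or A B ihA ihB =>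
    constructor
    · intro c hc
      rw [cnfP] at hc
      obtain ⟨c₁, hc₁, hcm⟩ := List.mem_flatMap.1 hc
      obtain ⟨c₂, hc₂, rfl⟩ := List.mem_map.1 hcm
      intro A hA
      simp only [Multiset.mem_add] at hA
      rcases hA with (hA | hA) | (hA | hA)
      · exact ihA.1 c₁ hc₁ A (Multiset.mem_add.2 (Or.inl hA))
      · exact ihB.1 c₂ hc₂ A (Multiset.mem_add.2 (Or.inl hA))
      · exact ihA.1 c₁ hc₁ A (Multiset.mem_add.2 (Or.inr hA))
      · exact ihB.1 c₂ hc₂ A (Multiset.mem_add.2 (Or.inr hA))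
    · intro c hc
      rw [cnfN] at hc
      rcases List.mem_append.1 hc with hc | hc
      · exact ihA.2 c hc
      · exact ihB.2 c hc

end RPL0
namespace RPL0

variable {A : Type}

/-- Abstract propositional resolution from a set of clauses. -/
inductive PDer (S : Set (Multiset A × Multiset A)) : Multiset A × Multiset A → Prop
  | base {c} : c ∈ S → PDer S c
  | res {Γ Δ Θp Λ : Multiset A} {p : A} {k l : ℕ} :
      0 < k → 0 < l → p ∉ Δ → p ∉ Θp →
      PDer S (Γ, Δ + Multiset.replicate k p) →
      PDer S (Multiset.replicate l p + Θp, Λ) →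
      PDer S (Γ + Θp, Δ + Λ)

theorem PDer.cut {S S' : Set (Multiset A × Multiset A)} {e : Multiset A × Multiset A}
    (h : PDer S' e) (hd : ∀ d ∈ S', PDer S d) : PDer S e := by
  induction h with
  | base hc => exact hd _ hc
  | res hk hl hΔ hΘp h1 h2 ih1 ih2 => exact PDer.res hk hl hΔ hΘp ih1 ih2

def PClTrue (g : A → Prop) (c : Multiset A × Multiset A) : Prop :=
  (∀ a ∈ c.1, g a) → ∃ b ∈ c.2, g b

def PUnsat (S : Set (Multiset A × Multiset A)) : Prop :=
  ∀ g : A → Prop, ∃ c ∈ S, ¬ PClTrue g c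

theorem multiset_filter_decomp [DecidableEq A] (m : Multiset A) (p : A) :
    m.filter (· ≠ p) + Multiset.replicate (m.count p) p = m := by
  have h1 : m.filter (· ≠ p) + m.filter (fun a => ¬ a ≠ p) = m := Multiset.filter_add_not _ m
  have h2 : m.filter (fun a => ¬ a ≠ p) = m.filter (· = p) := by
    apply Multiset.filter_congr
    intro a _
    constructor
    · exact not_not.1
    · exact fun h => not_not.2 h
  have h3 : m.filter (· = p) = Multiset.replicate (m.count p) p := by
    rw [Multiset.filter_eq']
  rw [h2, h3] at h1
  exact h1

/-- Completeness of propositional resolution for finite unsatisfiable clause sets. -/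
theorem pres_complete [DecidableEq A] [DecidableEq (Multiset A × Multiset A)] :
    ∀ (n : ℕ) (S : Finset (Multiset A × Multiset A)),
    (S.biUnion (fun c => c.1.toFinset ∪ c.2.toFinset)).card ≤ n →
    PUnsat (↑S : Set (Multiset A × Multiset A)) → PDer (↑S : Set (Multiset A × Multiset A)) (0, 0) := by
  intro n
  induction n with
  | zero =>
    intro S hcard hS
    obtain ⟨c, hc, hcf⟩ := hS (fun _ => True)
    have h2 : c.2 = 0 := by
      by_contra h
      obtain ⟨b, hb⟩ := Multiset.exists_mem_of_ne_zero h
      exact hcf (fun _ => ⟨b, hb, trivial⟩)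
    have h1 : c.1 = 0 := by
      by_contra h
      obtain ⟨a, ha⟩ := Multiset.exists_mem_of_ne_zero h
      have : a ∈ S.biUnion (fun c => c.1.toFinset ∪ c.2.toFinset) :=
        Finset.mem_biUnion.2 ⟨c, hc, Finset.mem_union_left _ (Multiset.mem_toFinset.2 ha)⟩
      have := Finset.card_pos.2 ⟨a, this⟩
      omega
    have : c = (0, 0) := Prod.ext h1 h2
    subst this
    exact PDer.base hc
  | succ n ih =>
    intro S hcard hS
    by_cases hemp : S.biUnion (fun c => c.1.toFinset ∪ c.2.toFinset) = ∅
    · -- same as base case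
      obtain ⟨c, hc, hcf⟩ := hS (fun _ => True)
      have h2 : c.2 = 0 := by
        by_contra h
        obtain ⟨b, hb⟩ := Multiset.exists_mem_of_ne_zero h
        exact hcf (fun _ => ⟨b, hb, trivial⟩)
      have h1 : c.1 = 0 := by
        by_contra h
        obtain ⟨a, ha⟩ := Multiset.exists_mem_of_ne_zero h
        have : a ∈ S.biUnion (fun c => c.1.toFinset ∪ c.2.toFinset) :=
          Finset.mem_biUnion.2 ⟨c, hc, Finset.mem_union_left _ (Multiset.mem_toFinset.2 ha)⟩
        rw [hemp] at this
        exact absurd this (Finset.notMem_empty a)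
      have : c = (0, 0) := Prod.ext h1 h2
      subst this
      exact PDer.base hc
    · obtain ⟨p, hp⟩ := Finset.nonempty_iff_ne_empty.2 hemp
      classical
      set atomsF := fun (T : Finset (Multiset A × Multiset A)) =>
        T.biUnion (fun c => c.1.toFinset ∪ c.2.toFinset) with hatomsF
      set S0 := S.filter (fun c => p ∉ c.1 ∧ p ∉ c.2) with hS0
      set Spos := S.filter (fun c => p ∈ c.2 ∧ p ∉ c.1) with hSpos
      set Sneg := S.filter (fun c => p ∈ c.1 ∧ p ∉ c.2) with hSneg
      set reso := fun (c d : Multiset A × Multiset A) =>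
        (c.1 + d.1.filter (· ≠ p), c.2.filter (· ≠ p) + d.2) with hreso
      set S' := S0 ∪ Spos.biUnion (fun c => Sneg.image (fun d => reso c d)) with hS'
      -- Every clause of S' is derivable from S
      have hder : ∀ e ∈ S', PDer (↑S) e := by
        intro e he
        rcases Finset.mem_union.1 he with he | he
        · exact PDer.base (Finset.mem_filter.1 he).1
        · obtain ⟨c, hc, he⟩ := Finset.mem_biUnion.1 he
          obtain ⟨d, hd, rfl⟩ := Finset.mem_image.1 he
          obtain ⟨hcS, hc2, hc1⟩ := Finset.mem_filter.1 hc
          obtain ⟨hdS, hd1, hd2⟩ := Finset.mem_filter.1 hd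
          have hk : 0 < c.2.count p := Multiset.count_pos.2 hc2
          have hl : 0 < d.1.count p := Multiset.count_pos.2 hd1
          have hΔ : p ∉ c.2.filter (· ≠ p) := by
            intro h
            exact (Multiset.of_mem_filter h) rfl
          have hΘp : p ∉ d.1.filter (· ≠ p) := by
            intro h
            exact (Multiset.of_mem_filter h) rfl
          refine PDer.res hk hl hΔ hΘp ?_ ?_
          · rw [show (c.1, c.2.filter (· ≠ p) + Multiset.replicate (c.2.count p) p) = c by
              rw [multiset_filter_decomp]]
            exact PDer.base hcS
          · rw [show (Multiset.replicate (d.1.count p) p + d.1.filter (· ≠ p), d.2) = d by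
              rw [add_comm, multiset_filter_decomp]]
            exact PDer.base hdS
      -- Atoms of S' avoid p
      have hsub : atomsF S' ⊆ (atomsF S).erase p := by
        intro a ha
        obtain ⟨e, he, hae⟩ := Finset.mem_biUnion.1 ha
        rcases Finset.mem_union.1 he with he | he
        · obtain ⟨heS, he1, he2⟩ := Finset.mem_filter.1 he
          refine Finset.mem_erase.2 ⟨?_, Finset.mem_biUnion.2 ⟨e, heS, hae⟩⟩
          rintro rfl
          rcases Finset.mem_union.1 hae with h | h
          · exact he1 (Multiset.mem_toFinset.1 h)
          · exact he2 (Multiset.mem_toFinset.1 h)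
        · obtain ⟨c, hc, he⟩ := Finset.mem_biUnion.1 he
          obtain ⟨d, hd, rfl⟩ := Finset.mem_image.1 he
          obtain ⟨hcS, hc2, hc1⟩ := Finset.mem_filter.1 hc
          obtain ⟨hdS, hd1, hd2⟩ := Finset.mem_filter.1 hd
          rcases Finset.mem_union.1 hae with h | h
          · rw [Multiset.mem_toFinset, Multiset.mem_add] at h
            rcases h with h | h
            · refine Finset.mem_erase.2 ⟨fun hap => hc1 (hap ▸ h),
                Finset.mem_biUnion.2 ⟨c, hcS, Finset.mem_union_left _ (Multiset.mem_toFinset.2 h)⟩⟩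
            · have h' := Multiset.mem_of_mem_filter h
              have hne := Multiset.of_mem_filter h
              exact Finset.mem_erase.2 ⟨hne, Finset.mem_biUnion.2 ⟨d, hdS,
                Finset.mem_union_left _ (Multiset.mem_toFinset.2 h')⟩⟩
          · rw [Multiset.mem_toFinset, Multiset.mem_add] at h
            rcases h with h | h
            · have h' := Multiset.mem_of_mem_filter h
              have hne := Multiset.of_mem_filter h
              exact Finset.mem_erase.2 ⟨hne, Finset.mem_biUnion.2 ⟨c, hcS,
                Finset.mem_union_right _ (Multiset.mem_toFinset.2 h')⟩⟩
            · refine Finset.mem_erase.2 ⟨fun hap => hd2 (hap ▸ h),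
                Finset.mem_biUnion.2 ⟨d, hdS, Finset.mem_union_right _ (Multiset.mem_toFinset.2 h)⟩⟩
      have hcard' : (atomsF S').card ≤ n := by
        have h1 : (atomsF S').card ≤ ((atomsF S).erase p).card := Finset.card_le_card hsub
        have h2 : ((atomsF S).erase p).card = (atomsF S).card - 1 :=
          Finset.card_erase_of_mem hp
        have hbd : (atomsF S).card ≤ n + 1 := hcard
        have hppos : 0 < (atomsF S).card := Finset.card_pos.2 ⟨p, hp⟩
        omega
      -- S' is unsatisfiable
      have hS'unsat : PUnsat (↑S' : Set (Multiset A × Multiset A)) := by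
        intro g
        obtain ⟨cT, hcT, hcTf⟩ := hS (fun a => if a = p then True else g a)
        obtain ⟨cF, hcF, hcFf⟩ := hS (fun a => if a = p then False else g a)
        rw [PClTrue] at hcTf hcFf
        push_neg at hcTf hcFf
        obtain ⟨hcT1, hcT2⟩ := hcTf
        obtain ⟨hcF1, hcF2⟩ := hcFf
        have hpT : p ∉ cT.2 := fun h => by simpa using hcT2 p h
        have hpF : p ∉ cF.1 := fun h => by simpa using hcF1 p h
        by_cases hT1 : p ∈ cT.1
        · by_cases hF2 : p ∈ cF.2
          · -- resolvent of cF (positive) and cT (negative)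
            refine ⟨reso cF cT, Finset.mem_union_right _ (Finset.mem_biUnion.2
              ⟨cF, Finset.mem_filter.2 ⟨hcF, hF2, hpF⟩,
               Finset.mem_image.2 ⟨cT, Finset.mem_filter.2 ⟨hcT, hT1, hpT⟩, rfl⟩⟩), ?_⟩
            rw [PClTrue]
            push_neg
            constructor
            · intro a ha
              rw [hreso] at ha
              simp only [Multiset.mem_add] at ha
              rcases ha with ha | ha
              · have := hcF1 a ha
                have hne : a ≠ p := fun h => hpF (h ▸ ha)
                simpa [hne] using this
              · have h' := Multiset.mem_of_mem_filter ha
                have hne := Multiset.of_mem_filter ha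
                have := hcT1 a h'
                simpa [hne] using this
            · intro b hb
              rw [hreso] at hb
              simp only [Multiset.mem_add] at hb
              rcases hb with hb | hb
              · have h' := Multiset.mem_of_mem_filter hb
                have hne := Multiset.of_mem_filter hb
                have := hcF2 b h'
                simpa [hne] using this
              · have := hcT2 b hb
                have hne : b ≠ p := fun h => hpT (h ▸ hb)
                simpa [hne] using this
          · -- cF is p-free and false under g
            refine ⟨cF, Finset.mem_union_left _ (Finset.mem_filter.2 ⟨hcF, hpF, hF2⟩), ?_⟩
            rw [PClTrue]
            push_neg
            constructor
            · intro a ha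
              have := hcF1 a ha
              have hne : a ≠ p := fun h => hpF (h ▸ ha)
              simpa [hne] using this
            · intro b hb
              have := hcF2 b hb
              have hne : b ≠ p := fun h => hF2 (h ▸ hb)
              simpa [hne] using this
        · -- cT is p-free and false under g
          refine ⟨cT, Finset.mem_union_left _ (Finset.mem_filter.2 ⟨hcT, hT1, hpT⟩), ?_⟩
          rw [PClTrue]
          push_neg
          constructor
          · intro a ha
            have := hcT1 a ha
            have hne : a ≠ p := fun h => hT1 (h ▸ ha)
            simpa [hne] using this
          · intro b hb
            have := hcT2 b hb
            have hne : b ≠ p := fun h => hpT (h ▸ hb)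
            simpa [hne] using this
      exact PDer.cut (ih S' hcard' hS'unsat) hder

end RPL0
namespace RPL0
variable {V Fn Pr : Type} {far : Fn → ℕ} {par : Pr → ℕ}

theorem FmTruth_congr {g g' : Fm V Fn far Pr par → Prop}
    (h : ∀ a, g a ↔ g' a) (G : Fm V Fn far Pr par) : FmTruth g G ↔ FmTruth g' G := by
  induction G with
  | atom P ts => exact h _
  | not A ihA => rw [show FmTruth g A.not ↔ ¬ FmTruth g A from Iff.rfl,
      show FmTruth g' A.not ↔ ¬ FmTruth g' A from Iff.rfl, ihA]
  | and A B ihA ihB => rw [show FmTruth g (A.and B) ↔ (FmTruth g A ∧ FmTruth g B) from Iff.rfl,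
      show FmTruth g' (A.and B) ↔ (FmTruth g' A ∧ FmTruth g' B) from Iff.rfl, ihA, ihB]
  | or A B ihA ihB => rw [show FmTruth g (A.or B) ↔ (FmTruth g A ∨ FmTruth g B) from Iff.rfl,
      show FmTruth g' (A.or B) ↔ (FmTruth g' A ∨ FmTruth g' B) from Iff.rfl, ihA, ihB]

theorem truthSet_clopen (G : Fm V Fn far Pr par) :
    IsClopen {g : Fm V Fn far Pr par → Bool | FmTruth (fun a => g a = true) G} := by
  induction G with
  | atom P ts =>
    have : {g : Fm V Fn far Pr par → Bool | FmTruth (fun a => g a = true) (Fm.atom P ts)}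
        = (fun g : Fm V Fn far Pr par → Bool => g (Fm.atom P ts)) ⁻¹' {true} := by
      ext g; simp [FmTruth]
    rw [this]
    exact (isClopen_discrete _).preimage (continuous_apply _)
  | not A ihA =>
    have : {g : Fm V Fn far Pr par → Bool | FmTruth (fun a => g a = true) A.not}
        = {g : Fm V Fn far Pr par → Bool | FmTruth (fun a => g a = true) A}ᶜ := by
      ext g; simp [FmTruth]
    rw [this]
    exact ihA.compl
  | and A B ihA ihB =>
    have : {g : Fm V Fn far Pr par → Bool | FmTruth (fun a => g a = true) (A.and B)}
        = {g : Fm V Fn far Pr par → Bool | FmTruth (fun a => g a = true) A}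
          ∩ {g | FmTruth (fun a => g a = true) B} := by
      ext g; simp [FmTruth]
    rw [this]
    exact ihA.inter ihB
  | or A B ihA ihB =>
    have : {g : Fm V Fn far Pr par → Bool | FmTruth (fun a => g a = true) (A.or B)}
        = {g : Fm V Fn far Pr par → Bool | FmTruth (fun a => g a = true) A}
          ∪ {g | FmTruth (fun a => g a = true) B} := by
      ext g; simp [FmTruth]
    rw [this]
    exact ihA.union ihB

/-- Compactness: if every valuation refutes some substitution instance of `F`, then finitely
many instances suffice. -/
theorem herbrand_finite (F : Fm V Fn far Pr par)
    (h : ∀ g : Fm V Fn far Pr par → Prop, ∃ σ : V → Tm V Fn far, ¬ FmTruth g (F.subst σ)) :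
    ∃ T : Finset (V → Tm V Fn far),
      ∀ g : Fm V Fn far Pr par → Prop, ∃ σ ∈ T, ¬ FmTruth g (F.subst σ) := by
  classical
  set Z : (V → Tm V Fn far) → Set (Fm V Fn far Pr par → Bool) :=
    fun σ => {g | FmTruth (fun a => g a = true) (F.subst σ)} with hZ
  have hempty : (Set.univ : Set (Fm V Fn far Pr par → Bool)) ∩ ⋂ σ, Z σ = ∅ := by
    by_contra hne
    obtain ⟨g, -, hg⟩ := Set.nonempty_iff_ne_empty.2 hne
    obtain ⟨σ, hσ⟩ := h (fun a => g a = true)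
    exact hσ (Set.mem_iInter.1 hg σ)
  obtain ⟨T, hT⟩ := IsCompact.elim_finite_subfamily_closed isCompact_univ Z
    (fun σ => (truthSet_clopen (F.subst σ)).isClosed) hempty
  refine ⟨T, fun g => ?_⟩
  set gb : Fm V Fn far Pr par → Bool := fun a => if g a then true else false with hgb
  have hcong : ∀ G, FmTruth (fun a => gb a = true) G ↔ FmTruth g G := by
    intro G
    apply FmTruth_congr
    intro a
    by_cases hga : g a <;> simp [hgb, hga]
  by_contra hcon
  push_neg at hcon
  have : gb ∈ Set.univ ∩ ⋂ σ ∈ T, Z σ := by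
    refine ⟨trivial, Set.mem_iInter₂.2 fun σ hσ => ?_⟩
    exact (hcong (F.subst σ)).2 (hcon σ hσ)
  rw [hT] at this
  exact this

end RPL0
namespace RPL0
variable {V Fn Pr : Type} {far : Fn → ℕ} {par : Pr → ℕ}

theorem exists_disjoint_ren (V : Type) [Infinite V] :
    ∃ ρ₁ ρ₂ : V → V, Function.Injective ρ₁ ∧ Function.Injective ρ₂ ∧
      ∀ v w, ρ₁ v ≠ ρ₂ w := by
  have h : Cardinal.mk (V ⊕ V) = Cardinal.mk V := by
    rw [Cardinal.mk_sum]
    simp only [Cardinal.lift_id]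
    exact Cardinal.add_eq_self (Cardinal.aleph0_le_mk V)
  obtain ⟨e⟩ := Cardinal.eq.1 h
  refine ⟨e ∘ Sum.inl, e ∘ Sum.inr, e.injective.comp Sum.inl_injective,
    e.injective.comp Sum.inr_injective, fun v w hvw => ?_⟩
  exact absurd (e.injective hvw) (by simp)

theorem map_split_pos [DecidableEq (Fm V Fn far Pr par)]
    {D : Multiset (Fm V Fn far Pr par)} {τ : V → Tm V Fn far}
    {Δg : Multiset (Fm V Fn far Pr par)} {p : Fm V Fn far Pr par} {k : ℕ}
    (hmap : D.map (Fm.subst τ) = Δg + Multiset.replicate k p) (hp : p ∉ Δg) :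
    (D.filter (fun B => B.subst τ = p)).map (Fm.subst τ) = Multiset.replicate k p ∧
    (D.filter (fun B => ¬ B.subst τ = p)).map (Fm.subst τ) = Δg := by
  constructor
  · have h1 := Multiset.filter_map (p := fun x => x = p) (Fm.subst τ) D
    simp only [Function.comp_def] at h1
    rw [← h1, hmap, Multiset.filter_eq', Multiset.count_add,
      Multiset.count_eq_zero.2 hp, Multiset.count_replicate_self, zero_add]
  · have h1 := Multiset.filter_map (p := fun x => ¬ x = p) (Fm.subst τ) D
    simp only [Function.comp_def] at h1
    rw [← h1, hmap, Multiset.filter_add]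
    have e1 : Multiset.filter (fun x => ¬ x = p) Δg = Δg :=
      Multiset.filter_eq_self.2 (fun a ha h => hp (h ▸ ha))
    have e2 : Multiset.filter (fun x => ¬ x = p) (Multiset.replicate k p) = 0 :=
      Multiset.filter_eq_nil.2 (fun a ha hnp => hnp (Multiset.eq_of_mem_replicate ha))
    rw [e1, e2, add_zero]

/-- The lifting theorem: every clause derivable by ground (instance-level) resolution from
instances of the CNF of `F` is an instance of a clause of atomic formulas derivable in `RPL₀`
(under every renaming). -/
theorem pder_lift [Infinite V] {Ax : Set (Fm V Fn far Pr par)} {F : Fm V Fn far Pr par}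
    (hAx : ∀ ρ : V → V, Function.Injective ρ → F.subst (ren ρ) ∈ Ax)
    {c : Multiset (Fm V Fn far Pr par) × Multiset (Fm V Fn far Pr par)}
    (h : PDer {c | ∃ (σ : V → Tm V Fn far)
        (c₀ : Multiset (Fm V Fn far Pr par) × Multiset (Fm V Fn far Pr par)),
        c₀ ∈ cnfP F ∧ c = (c₀.1.map (Fm.subst σ), c₀.2.map (Fm.subst σ))} c) :
    ∃ Γs Δs : Multiset (Fm V Fn far Pr par),
      (∀ B ∈ Γs + Δs, B.IsAtom) ∧
      (∀ ρ : V → V, Function.Injective ρ →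
        Der Ax (Γs.map (Fm.subst (ren ρ))) (Δs.map (Fm.subst (ren ρ)))) ∧
      ∃ τ, Γs.map (Fm.subst τ) = c.1 ∧ Δs.map (Fm.subst τ) = c.2 := by
  classical
  induction h with
  | base hc =>
    obtain ⟨σ, c₀, hc₀, rfl⟩ := hc
    refine ⟨c₀.1, c₀.2, (cnf_atoms F).1 c₀ hc₀, ?_, σ, rfl, rfl⟩
    intro ρ hρ
    have hax : Der Ax 0 ((F.subst (ren ρ)) ::ₘ 0) := Der.ax (hAx ρ hρ)
    have hmem : ((c₀.1.map (Fm.subst (ren ρ)), c₀.2.map (Fm.subst (ren ρ))))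
        ∈ cnfP (F.subst (ren ρ)) := by
      rw [(cnf_subst (ren ρ) F).1]
      exact List.mem_map.2 ⟨c₀, hc₀, rfl⟩
    have := (der_cnf (F.subst (ren ρ))).1 0 0 hax _ hmem
    simpa using this
  | @res Γg Δg Tg Λg p k l hk hl hpΔ hpT h1 h2 ih1 ih2 =>
    obtain ⟨G₁, D₁, hat₁, hder₁, τ₁, hG₁, hD₁⟩ := ih1
    obtain ⟨G₂, D₂, hat₂, hder₂, τ₂, hG₂, hD₂⟩ := ih2
    -- split the positive premise's succedent
    obtain ⟨hAsmap, hDsmap⟩ := map_split_pos hD₁ hpΔ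
    set As := D₁.filter (fun B => B.subst τ₁ = p) with hAs
    set Ds := D₁.filter (fun B => ¬ B.subst τ₁ = p) with hDs
    have hsplit₁ : As + Ds = D₁ := Multiset.filter_add_not _ _
    -- split the negative premise's antecedent
    rw [add_comm] at hG₂
    obtain ⟨hBsmap, hGsmap⟩ := map_split_pos hG₂ hpT
    set Bs := G₂.filter (fun B => B.subst τ₂ = p) with hBs
    set Gs := G₂.filter (fun B => ¬ B.subst τ₂ = p) with hGs
    have hsplit₂ : Bs + Gs = G₂ := Multiset.filter_add_not _ _
    have hAs0 : As ≠ 0 := by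
      intro h0
      rw [h0, Multiset.map_zero] at hAsmap
      have := congrArg Multiset.card hAsmap
      simp at this
      omega
    have hBs0 : Bs ≠ 0 := by
      intro h0
      rw [h0, Multiset.map_zero] at hBsmap
      have := congrArg Multiset.card hBsmap
      simp at this
      omega
    -- renamings with disjoint ranges
    obtain ⟨ρ₁, ρ₂, hρ₁, hρ₂, hdisj⟩ := exists_disjoint_ren V
    -- the combined instance substitution
    set σc : V → Tm V Fn far := fun w =>
      if h : ∃ v, ρ₁ v = w then τ₁ h.choose
      else if h : ∃ v, ρ₂ v = w then τ₂ h.choose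
      else Tm.var w with hσc
    have hσ₁ : ∀ v, σc (ρ₁ v) = τ₁ v := by
      intro v
      have hex : ∃ u, ρ₁ u = ρ₁ v := ⟨v, rfl⟩
      simp only [hσc]
      rw [dif_pos hex]
      exact congrArg τ₁ (hρ₁ hex.choose_spec)
    have hσ₂ : ∀ v, σc (ρ₂ v) = τ₂ v := by
      intro v
      have hnex : ¬ ∃ u, ρ₁ u = ρ₂ v := fun ⟨u, hu⟩ => hdisj u v hu
      have hex : ∃ u, ρ₂ u = ρ₂ v := ⟨v, rfl⟩
      simp only [hσc]
      rw [dif_neg hnex, dif_pos hex]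
      exact congrArg τ₂ (hρ₂ hex.choose_spec)
    have hcomp₁ : ∀ B : Fm V Fn far Pr par, (B.subst (ren ρ₁)).subst σc = B.subst τ₁ := by
      intro B
      rw [Fm.subst_subst]
      exact congrFun (congrArg _ (funext fun v => hσ₁ v)) B |>.trans rfl
    have hcomp₂ : ∀ B : Fm V Fn far Pr par, (B.subst (ren ρ₂)).subst σc = B.subst τ₂ := by
      intro B
      rw [Fm.subst_subst]
      exact congrFun (congrArg _ (funext fun v => hσ₂ v)) B |>.trans rfl
    set SS := As.map (Fm.subst (ren ρ₁)) + Bs.map (Fm.subst (ren ρ₂)) with hSS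
    have hSSat : ∀ A ∈ SS, A.IsAtom := by
      intro A hA
      rw [hSS, Multiset.mem_add] at hA
      rcases hA with hA | hA
      · obtain ⟨B, hB, rfl⟩ := Multiset.mem_map.1 hA
        rw [hAs] at hB
        exact (hat₁ B (Multiset.mem_add.2 (Or.inr (Multiset.mem_of_mem_filter hB)))).subst _
      · obtain ⟨B, hB, rfl⟩ := Multiset.mem_map.1 hA
        rw [hBs] at hB
        exact (hat₂ B (Multiset.mem_add.2 (Or.inl (Multiset.mem_of_mem_filter hB)))).subst _
    have hSSp : ∀ A ∈ SS, A.subst σc = p := by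
      intro A hA
      rw [hSS, Multiset.mem_add] at hA
      rcases hA with hA | hA
      · obtain ⟨B, hB, rfl⟩ := Multiset.mem_map.1 hA
        rw [hAs] at hB
        rw [hcomp₁]
        exact Multiset.of_mem_filter (p := fun B => Fm.subst τ₁ B = p) hB
      · obtain ⟨B, hB, rfl⟩ := Multiset.mem_map.1 hA
        rw [hBs] at hB
        rw [hcomp₂]
        exact Multiset.of_mem_filter (p := fun B => Fm.subst τ₂ B = p) hB
    have hSSuni : Unifies σc SS := fun A hA B hB => by rw [hSSp A hA, hSSp B hB]
    obtain ⟨θ, hθ⟩ := mgu_exists SS hSSat ⟨σc, hSSuni⟩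
    -- variable disjointness of the two sides
    have hvdisj : ∀ v : V, (∃ A ∈ As.map (Fm.subst (ren ρ₁)), Fm.HasVar v A) →
        ¬ ∃ B ∈ Bs.map (Fm.subst (ren ρ₂)), Fm.HasVar v B := by
      rintro v ⟨A, hA, hvA⟩ ⟨B, hB, hvB⟩
      obtain ⟨A', hA', rfl⟩ := Multiset.mem_map.1 hA
      obtain ⟨B', hB', rfl⟩ := Multiset.mem_map.1 hB
      obtain ⟨a, ha⟩ := Fm.hasVar_ren hvA
      obtain ⟨b, hb⟩ := Fm.hasVar_ren hvB
      exact hdisj a b (ha.trans hb.symm)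
    -- map composition helpers
    have hmapcomp : ∀ (ξ : V → Tm V Fn far) (X : Multiset (Fm V Fn far Pr par)),
        (X.map (Fm.subst θ)).map (Fm.subst ξ) = X.map (Fm.subst (fun v => (θ v).subst ξ)) := by
      intro ξ X
      rw [Multiset.map_map]
      exact Multiset.map_congr rfl (fun B _ => Fm.subst_subst θ ξ B)
    refine ⟨(G₁.map (Fm.subst (ren ρ₁))).map (Fm.subst θ)
              + (Gs.map (Fm.subst (ren ρ₂))).map (Fm.subst θ),
            (Ds.map (Fm.subst (ren ρ₁))).map (Fm.subst θ)
              + (D₂.map (Fm.subst (ren ρ₂))).map (Fm.subst θ), ?_, ?_, ?_⟩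
    · intro B hB
      simp only [Multiset.mem_add, Multiset.mem_map] at hB
      rcases hB with (⟨B', ⟨B'', hB'', rfl⟩, rfl⟩ | ⟨B', ⟨B'', hB'', rfl⟩, rfl⟩)
        | (⟨B', ⟨B'', hB'', rfl⟩, rfl⟩ | ⟨B', ⟨B'', hB'', rfl⟩, rfl⟩)
      · exact ((hat₁ B'' (Multiset.mem_add.2 (Or.inl hB''))).subst _).subst _
      · exact ((hat₂ B'' (Multiset.mem_add.2
          (Or.inl (Multiset.mem_of_mem_filter hB'')))).subst _).subst _
      · exact ((hat₁ B'' (Multiset.mem_add.2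
          (Or.inr (Multiset.mem_of_mem_filter hB'')))).subst _).subst _
      · exact ((hat₂ B'' (Multiset.mem_add.2 (Or.inr hB''))).subst _).subst _
    · intro ρ hρ
      have hmgu' : IsMGU (fun v => (θ v).subst (ren ρ)) SS := hθ.comp_ren hρ
      have hd₁ := hder₁ ρ₁ hρ₁
      have hd₂ := hder₂ ρ₂ hρ₂
      rw [← hsplit₁, Multiset.map_add, add_comm] at hd₁
      rw [← hsplit₂, Multiset.map_add] at hd₂
      have hres := Der.res (Ax := Ax) (Γ := G₁.map (Fm.subst (ren ρ₁)))
        (Δ := Ds.map (Fm.subst (ren ρ₁))) (Γ₂ := Gs.map (Fm.subst (ren ρ₂)))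
        (Λ := D₂.map (Fm.subst (ren ρ₂)))
        (As.map (Fm.subst (ren ρ₁))) (Bs.map (Fm.subst (ren ρ₂)))
        (fun v => (θ v).subst (ren ρ))
        (by rwa [Ne, Multiset.map_eq_zero]) (by rwa [Ne, Multiset.map_eq_zero])
        hvdisj hmgu' hd₁ hd₂
      rw [Multiset.map_add, Multiset.map_add, hmapcomp, hmapcomp, hmapcomp, hmapcomp]
      exact hres
    · obtain ⟨η, hη⟩ := hθ.2 σc hSSuni
      have hθη : ∀ X : Multiset (Fm V Fn far Pr par),
          ((X.map (Fm.subst θ)).map (Fm.subst η)) = X.map (Fm.subst σc) := by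
        intro X
        rw [hmapcomp]
        exact congrArg (fun ξ => X.map (Fm.subst ξ)) (funext hη)
      have hren₁ : ∀ X : Multiset (Fm V Fn far Pr par),
          (X.map (Fm.subst (ren ρ₁))).map (Fm.subst σc) = X.map (Fm.subst τ₁) := by
        intro X
        rw [Multiset.map_map]
        exact Multiset.map_congr rfl (fun B _ => hcomp₁ B)
      have hren₂ : ∀ X : Multiset (Fm V Fn far Pr par),
          (X.map (Fm.subst (ren ρ₂))).map (Fm.subst σc) = X.map (Fm.subst τ₂) := by
        intro X
        rw [Multiset.map_map]
        exact Multiset.map_congr rfl (fun B _ => hcomp₂ B)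
      refine ⟨η, ?_, ?_⟩
      · show Multiset.map (Fm.subst η) _ = Γg + Tg
        rw [Multiset.map_add, hθη, hθη, hren₁, hren₂, hG₁, hGsmap]
      · show Multiset.map (Fm.subst η) _ = Δg + Λg
        rw [Multiset.map_add, hθη, hθη, hren₁, hren₂, hDsmap, hD₂]

end RPL0

namespace RPL0
variable {V Fn Pr : Type} {far : Fn → ℕ} {par : Pr → ℕ}

theorem Tm.eval_app_subst (v : V → Tm V Fn far) (t : Tm V Fn far) :
    Tm.eval Tm.app v t = t.subst v := by
  induction t with
  | var w => rfl
  | app f ts ih =>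
    rw [Tm.eval, Tm.subst]
    exact congrArg _ (funext fun i => ih i)

theorem truth_iff (g : Fm V Fn far Pr par → Prop) (v : V → Tm V Fn far)
    (G : Fm V Fn far Pr par) :
    Fm.truth Tm.app (fun P ts => g (Fm.atom P ts)) v G ↔ FmTruth g (G.subst v) := by
  induction G with
  | atom P ts =>
    rw [Fm.truth, Fm.subst]
    rw [show FmTruth g (Fm.atom P fun i => (ts i).subst v)
      ↔ g (Fm.atom P fun i => (ts i).subst v) from Iff.rfl]
    have he : (fun i => Tm.eval Tm.app v (ts i)) = fun i => (ts i).subst v :=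
      funext fun i => Tm.eval_app_subst v (ts i)
    rw [he]
  | not A ihA =>
    rw [Fm.truth, Fm.subst]
    rw [show FmTruth g ((A.subst v).not) ↔ ¬ FmTruth g (A.subst v) from Iff.rfl, ihA]
  | and A B ihA ihB =>
    rw [Fm.truth, Fm.subst]
    rw [show FmTruth g ((A.subst v).and (B.subst v))
      ↔ (FmTruth g (A.subst v) ∧ FmTruth g (B.subst v)) from Iff.rfl, ihA, ihB]
  | or A B ihA ihB =>
    rw [Fm.truth, Fm.subst]
    rw [show FmTruth g ((A.subst v).or (B.subst v))
      ↔ (FmTruth g (A.subst v) ∨ FmTruth g (B.subst v)) from Iff.rfl, ihA, ihB]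

end RPL0

open RPL0

/-- Refutational completeness of `RPL₀`: for every quantifier-free first-order
formula `F` whose universal closure is unsatisfiable, the empty sequent `⊢` is derivable in
`RPL₀` from axioms of the form `⊢ Fϑ` where `ϑ` is a renaming of the variables of `F`. -/
theorem statement11 (V Fn Pr : Type) [Infinite V] (far : Fn → ℕ) (par : Pr → ℕ)
    (F : Fm V Fn far Pr par)
    (hunsat : ∀ (α : Type) (_ : Nonempty α) (fI : (f : Fn) → (Fin (far f) → α) → α)
      (pI : (P : Pr) → (Fin (par P) → α) → Prop), ¬ ∀ v : V → α, Fm.truth fI pI v F) :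
    Der {G | ∃ ρ : V → V, Function.Injective ρ ∧ G = F.subst fun v => Tm.var (ρ v)} 0 0 := by
  classical
  set Ax : Set (Fm V Fn far Pr par) :=
    {G | ∃ ρ : V → V, Function.Injective ρ ∧ G = F.subst fun v => Tm.var (ρ v)} with hAxdef
  have hAx : ∀ ρ : V → V, Function.Injective ρ → F.subst (ren ρ) ∈ Ax :=
    fun ρ hρ => ⟨ρ, hρ, rfl⟩
  -- Step 1: every propositional valuation refutes some instance of F
  have h1 : ∀ g : Fm V Fn far Pr par → Prop, ∃ σ : V → Tm V Fn far,
      ¬ FmTruth g (F.subst σ) := by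
    intro g
    have hne : Nonempty (Tm V Fn far) := ⟨Tm.var (Classical.arbitrary V)⟩
    have := hunsat (Tm V Fn far) hne Tm.app (fun P ts => g (Fm.atom P ts))
    push_neg at this
    obtain ⟨σ, hσ⟩ := this
    exact ⟨σ, fun hc => hσ ((truth_iff g σ F).2 hc)⟩
  -- Step 2: compactness
  obtain ⟨T, hT⟩ := herbrand_finite F h1
  -- Step 3: the finite unsatisfiable set of instance clauses
  set S : Finset (Multiset (Fm V Fn far Pr par) × Multiset (Fm V Fn far Pr par)) :=
    T.biUnion (fun σ => ((cnfP F).map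
      (fun c => (c.1.map (Fm.subst σ), c.2.map (Fm.subst σ)))).toFinset) with hSdef
  have hSunsat : PUnsat (↑S : Set (Multiset (Fm V Fn far Pr par) × Multiset (Fm V Fn far Pr par))) := by
    intro g
    obtain ⟨σ, hσT, hσ⟩ := hT g
    have hex : ∃ c ∈ cnfP (F.subst σ), ¬ ClTrue g c := by
      by_contra hcon
      push_neg at hcon
      exact hσ ((cnf_sem g (F.subst σ)).1.2 hcon)
    obtain ⟨c, hc, hcf⟩ := hex
    rw [(cnf_subst σ F).1] at hc
    obtain ⟨c₀, hc₀, rfl⟩ := List.mem_map.1 hc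
    exact ⟨_, Finset.mem_coe.2 (Finset.mem_biUnion.2 ⟨σ, hσT,
      List.mem_toFinset.2 (List.mem_map.2 ⟨c₀, hc₀, rfl⟩)⟩), hcf⟩
  -- Step 4: propositional resolution refutation
  have hPD := pres_complete (S.biUnion (fun c => c.1.toFinset ∪ c.2.toFinset)).card S
    le_rfl hSunsat
  -- Step 5: monotonicity into the full set of ground instances
  have hPD' : PDer {c | ∃ (σ : V → Tm V Fn far)
      (c₀ : Multiset (Fm V Fn far Pr par) × Multiset (Fm V Fn far Pr par)),
      c₀ ∈ cnfP F ∧ c = (c₀.1.map (Fm.subst σ), c₀.2.map (Fm.subst σ))} (0, 0) := by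
    refine PDer.cut hPD (fun d hd => PDer.base ?_)
    obtain ⟨σ, hσT, hdm⟩ := Finset.mem_biUnion.1 (Finset.mem_coe.1 hd)
    obtain ⟨c₀, hc₀, rfl⟩ := List.mem_map.1 (List.mem_toFinset.1 hdm)
    exact ⟨σ, c₀, hc₀, rfl⟩
  -- Step 6: lifting
  obtain ⟨Γs, Δs, hat, hder, τ, hΓ, hΔ⟩ := pder_lift hAx hPD'
  have hΓ0 : Γs = 0 := Multiset.map_eq_zero.1 hΓ
  have hΔ0 : Δs = 0 := Multiset.map_eq_zero.1 hΔ
  have := hder id Function.injective_id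
  rw [hΓ0, hΔ0] at this
  simpa using this
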